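/- (Tensor product of SDRs.) Let (f^ℓ, g^ℓ, h^ℓ) : A^ℓ → B^ℓ and (f^r, g^r, h^r) : A^r → B^r be strong deformation retractions of chain complexes of abelian groups (with side conditions fh=0, hg=0, hh=0). Then (f^ℓ⊗f^r, g^ℓ⊗g^r, h^ℓ⊗1 + g^ℓf^ℓ⊗h^r) is a strong deformation retraction from A^ℓ⊗A^r to B^ℓ⊗B^r satisfying the same side conditions, where tensor products of maps use the Koszul sign convention. -/

import Mathlib

open TensorProduct

/-- **Tensor product of SDRs.** Given strong deformation retractions
`(fℓ, gℓ, hℓ) : Aℓ → Bℓ` and `(fr, gr, hr) : Ar → Br` of chain complexes of abelian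
groups (with side conditions), the triple
`(fℓ⊗fr, gℓ⊗gr, hℓ⊗1 + gℓfℓ⊗hr)` is a strong deformation retraction
`Aℓ⊗Ar → Bℓ⊗Br` with the same side conditions.  Koszul signs are encoded via the
sign involutions `σ` of the left-hand complexes (`σ = (-1)^i` on degree `i`), so that
the tensor differential is `d⊗1 + σ⊗d` and `gℓfℓ⊗hr` acts as `(gℓfℓσAℓ)⊗hr`. -/
theorem sdr_tensor
    {Aℓ Bℓ Ar Br : Type*} [AddCommGroup Aℓ] [AddCommGroup Bℓ]
    [AddCommGroup Ar] [AddCommGroup Br]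
    (dAℓ : Aℓ →ₗ[ℤ] Aℓ) (dBℓ : Bℓ →ₗ[ℤ] Bℓ) (dAr : Ar →ₗ[ℤ] Ar) (dBr : Br →ₗ[ℤ] Br)
    (hdAℓ : dAℓ ∘ₗ dAℓ = 0) (hdBℓ : dBℓ ∘ₗ dBℓ = 0)
    (hdAr : dAr ∘ₗ dAr = 0) (hdBr : dBr ∘ₗ dBr = 0)
    -- sign involutions of the left complexes:
    (σAℓ : Aℓ →ₗ[ℤ] Aℓ) (σBℓ : Bℓ →ₗ[ℤ] Bℓ)
    (hσAℓ : σAℓ ∘ₗ σAℓ = LinearMap.id) (hσBℓ : σBℓ ∘ₗ σBℓ = LinearMap.id)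
    (hσdAℓ : σAℓ ∘ₗ dAℓ = -(dAℓ ∘ₗ σAℓ)) (hσdBℓ : σBℓ ∘ₗ dBℓ = -(dBℓ ∘ₗ σBℓ))
    -- the left SDR:
    (fℓ : Aℓ →ₗ[ℤ] Bℓ) (gℓ : Bℓ →ₗ[ℤ] Aℓ) (hℓ : Aℓ →ₗ[ℤ] Aℓ)
    (hfℓchain : fℓ ∘ₗ dAℓ = dBℓ ∘ₗ fℓ) (hgℓchain : dAℓ ∘ₗ gℓ = gℓ ∘ₗ dBℓ)
    (hfℓσ : σBℓ ∘ₗ fℓ = fℓ ∘ₗ σAℓ) (hgℓσ : σAℓ ∘ₗ gℓ = gℓ ∘ₗ σBℓ)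
    (hhℓσ : σAℓ ∘ₗ hℓ = -(hℓ ∘ₗ σAℓ))
    (hfgℓ : fℓ ∘ₗ gℓ = LinearMap.id)
    (hhomℓ : dAℓ ∘ₗ hℓ + hℓ ∘ₗ dAℓ = LinearMap.id - gℓ ∘ₗ fℓ)
    (hfhℓ : fℓ ∘ₗ hℓ = 0) (hhgℓ : hℓ ∘ₗ gℓ = 0) (hhhℓ : hℓ ∘ₗ hℓ = 0)
    -- the right SDR:
    (fr : Ar →ₗ[ℤ] Br) (gr : Br →ₗ[ℤ] Ar) (hr : Ar →ₗ[ℤ] Ar)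
    (hfrchain : fr ∘ₗ dAr = dBr ∘ₗ fr) (hgrchain : dAr ∘ₗ gr = gr ∘ₗ dBr)
    (hfgr : fr ∘ₗ gr = LinearMap.id)
    (hhomr : dAr ∘ₗ hr + hr ∘ₗ dAr = LinearMap.id - gr ∘ₗ fr)
    (hfhr : fr ∘ₗ hr = 0) (hhgr : hr ∘ₗ gr = 0) (hhhr : hr ∘ₗ hr = 0) :
    let DA : Aℓ ⊗[ℤ] Ar →ₗ[ℤ] Aℓ ⊗[ℤ] Ar :=
      TensorProduct.map dAℓ LinearMap.id + TensorProduct.map σAℓ dAr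
    let DB : Bℓ ⊗[ℤ] Br →ₗ[ℤ] Bℓ ⊗[ℤ] Br :=
      TensorProduct.map dBℓ LinearMap.id + TensorProduct.map σBℓ dBr
    let F : Aℓ ⊗[ℤ] Ar →ₗ[ℤ] Bℓ ⊗[ℤ] Br := TensorProduct.map fℓ fr
    let G : Bℓ ⊗[ℤ] Br →ₗ[ℤ] Aℓ ⊗[ℤ] Ar := TensorProduct.map gℓ gr
    let H : Aℓ ⊗[ℤ] Ar →ₗ[ℤ] Aℓ ⊗[ℤ] Ar :=
      TensorProduct.map hℓ LinearMap.id + TensorProduct.map ((gℓ ∘ₗ fℓ) ∘ₗ σAℓ) hr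
    F ∘ₗ DA = DB ∘ₗ F ∧
    DA ∘ₗ G = G ∘ₗ DB ∧
    F ∘ₗ G = LinearMap.id ∧
    DA ∘ₗ H + H ∘ₗ DA = LinearMap.id - G ∘ₗ F ∧
    F ∘ₗ H = 0 ∧ H ∘ₗ G = 0 ∧ H ∘ₗ H = 0 := by

  intro DA DB F G H
  -- pointwise versions of all hypotheses
  have pfℓd : ∀ a, fℓ (dAℓ a) = dBℓ (fℓ a) := fun a => LinearMap.congr_fun hfℓchain a
  have pgℓd : ∀ b, dAℓ (gℓ b) = gℓ (dBℓ b) := fun b => LinearMap.congr_fun hgℓchain b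
  have pfℓσ : ∀ a, σBℓ (fℓ a) = fℓ (σAℓ a) := fun a => LinearMap.congr_fun hfℓσ a
  have pgℓσ : ∀ b, σAℓ (gℓ b) = gℓ (σBℓ b) := fun b => LinearMap.congr_fun hgℓσ b
  have phℓσ : ∀ a, σAℓ (hℓ a) = -(hℓ (σAℓ a)) := fun a => LinearMap.congr_fun hhℓσ a
  have pσσ : ∀ a, σAℓ (σAℓ a) = a := fun a => LinearMap.congr_fun hσAℓ a
  have pσd : ∀ a, σAℓ (dAℓ a) = -(dAℓ (σAℓ a)) := fun a => LinearMap.congr_fun hσdAℓ a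
  have pfgℓ : ∀ b, fℓ (gℓ b) = b := fun b => LinearMap.congr_fun hfgℓ b
  have pfhℓ : ∀ a, fℓ (hℓ a) = 0 := fun a => LinearMap.congr_fun hfhℓ a
  have phgℓ : ∀ b, hℓ (gℓ b) = 0 := fun b => LinearMap.congr_fun hhgℓ b
  have phhℓ : ∀ a, hℓ (hℓ a) = 0 := fun a => LinearMap.congr_fun hhhℓ a
  have phomℓ : ∀ a, dAℓ (hℓ a) = a - gℓ (fℓ a) - hℓ (dAℓ a) := by
    intro a
    have := LinearMap.congr_fun hhomℓ a
    simp only [LinearMap.add_apply, LinearMap.comp_apply, LinearMap.sub_apply,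
      LinearMap.id_apply] at this
    exact eq_sub_of_add_eq this
  have pfrd : ∀ a, fr (dAr a) = dBr (fr a) := fun a => LinearMap.congr_fun hfrchain a
  have pgrd : ∀ b, dAr (gr b) = gr (dBr b) := fun b => LinearMap.congr_fun hgrchain b
  have pfgr : ∀ b, fr (gr b) = b := fun b => LinearMap.congr_fun hfgr b
  have pfhr : ∀ a, fr (hr a) = 0 := fun a => LinearMap.congr_fun hfhr a
  have phgr : ∀ b, hr (gr b) = 0 := fun b => LinearMap.congr_fun hhgr b
  have phhr : ∀ a, hr (hr a) = 0 := fun a => LinearMap.congr_fun hhhr a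
  have phomr : ∀ a, dAr (hr a) = a - gr (fr a) - hr (dAr a) := by
    intro a
    have := LinearMap.congr_fun hhomr a
    simp only [LinearMap.add_apply, LinearMap.comp_apply, LinearMap.sub_apply,
      LinearMap.id_apply] at this
    exact eq_sub_of_add_eq this
  refine ⟨?_, ?_, ?_, ?_, ?_, ?_, ?_⟩
  · show map fℓ fr ∘ₗ (map dAℓ LinearMap.id + map σAℓ dAr) = (map dBℓ LinearMap.id + map σBℓ dBr) ∘ₗ map fℓ fr
    refine TensorProduct.ext' fun a b => ?_
    simp only [DA, DB, F, LinearMap.comp_apply, LinearMap.add_apply,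
      AlgebraTensorModule.curry_apply, TensorProduct.curry_apply,
      LinearMap.coe_restrictScalars, TensorProduct.map_tmul, LinearMap.id_apply,
      map_add, pfℓd, pfℓσ, pfrd]
  · show (map dAℓ LinearMap.id + map σAℓ dAr) ∘ₗ map gℓ gr = map gℓ gr ∘ₗ (map dBℓ LinearMap.id + map σBℓ dBr)
    refine TensorProduct.ext' fun a b => ?_
    simp only [DA, DB, G, LinearMap.comp_apply, LinearMap.add_apply,
      AlgebraTensorModule.curry_apply, TensorProduct.curry_apply,
      LinearMap.coe_restrictScalars, TensorProduct.map_tmul, LinearMap.id_apply,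
      map_add, pgℓd, pgℓσ, pgrd]
  · show map fℓ fr ∘ₗ map gℓ gr = LinearMap.id
    refine TensorProduct.ext' fun a b => ?_
    simp only [F, G, LinearMap.comp_apply,
      AlgebraTensorModule.curry_apply, TensorProduct.curry_apply,
      LinearMap.coe_restrictScalars, TensorProduct.map_tmul, LinearMap.id_apply,
      pfgℓ, pfgr]
  · refine TensorProduct.ext' fun a b => ?_
    show map dAℓ LinearMap.id (map hℓ LinearMap.id (a ⊗ₜ b) + map ((gℓ ∘ₗ fℓ) ∘ₗ σAℓ) hr (a ⊗ₜ b)) + map σAℓ dAr (map hℓ LinearMap.id (a ⊗ₜ b) + map ((gℓ ∘ₗ fℓ) ∘ₗ σAℓ) hr (a ⊗ₜ b)) +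
      (map hℓ LinearMap.id (map dAℓ LinearMap.id (a ⊗ₜ b) + map σAℓ dAr (a ⊗ₜ b)) + map ((gℓ ∘ₗ fℓ) ∘ₗ σAℓ) hr (map dAℓ LinearMap.id (a ⊗ₜ b) + map σAℓ dAr (a ⊗ₜ b))) =
      a ⊗ₜ b - map gℓ gr (map fℓ fr (a ⊗ₜ b))
    simp only [DA, F, G, H, LinearMap.comp_apply, LinearMap.add_apply,
      LinearMap.sub_apply, AlgebraTensorModule.curry_apply,
      TensorProduct.curry_apply, LinearMap.coe_restrictScalars,
      TensorProduct.map_tmul, LinearMap.id_apply, map_add, map_neg,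
      phℓσ, pσσ, pσd, pgℓσ, pfℓσ, pgℓd, pfℓd, phomℓ, phomr, pfgℓ]
    simp only [map_sub, map_add, map_neg, TensorProduct.sub_tmul,
      TensorProduct.add_tmul, TensorProduct.neg_tmul, TensorProduct.tmul_sub,
      TensorProduct.tmul_add, TensorProduct.tmul_neg, pgℓd, pfℓd, pfgℓ]
    abel
  · refine TensorProduct.ext' fun a b => ?_
    show map fℓ fr (map hℓ LinearMap.id (a ⊗ₜ b) + map ((gℓ ∘ₗ fℓ) ∘ₗ σAℓ) hr (a ⊗ₜ b)) = 0
    simp only [F, H, LinearMap.comp_apply, LinearMap.add_apply,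
      LinearMap.zero_apply, AlgebraTensorModule.curry_apply,
      TensorProduct.curry_apply, LinearMap.coe_restrictScalars,
      TensorProduct.map_tmul, LinearMap.id_apply, map_add,
      pfhℓ, pfhr, pfgℓ, TensorProduct.zero_tmul, TensorProduct.tmul_zero,
      add_zero, zero_add]
  · refine TensorProduct.ext' fun a b => ?_
    show map hℓ LinearMap.id (map gℓ gr (a ⊗ₜ b)) + map ((gℓ ∘ₗ fℓ) ∘ₗ σAℓ) hr (map gℓ gr (a ⊗ₜ b)) = 0
    simp only [G, H, LinearMap.comp_apply, LinearMap.add_apply,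
      LinearMap.zero_apply, AlgebraTensorModule.curry_apply,
      TensorProduct.curry_apply, LinearMap.coe_restrictScalars,
      TensorProduct.map_tmul, LinearMap.id_apply, map_add,
      phgℓ, phgr, pgℓσ, TensorProduct.zero_tmul, TensorProduct.tmul_zero,
      add_zero, zero_add]
  · refine TensorProduct.ext' fun a b => ?_
    show map hℓ LinearMap.id (map hℓ LinearMap.id (a ⊗ₜ b) + map ((gℓ ∘ₗ fℓ) ∘ₗ σAℓ) hr (a ⊗ₜ b)) + map ((gℓ ∘ₗ fℓ) ∘ₗ σAℓ) hr (map hℓ LinearMap.id (a ⊗ₜ b) + map ((gℓ ∘ₗ fℓ) ∘ₗ σAℓ) hr (a ⊗ₜ b)) = 0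
    simp only [H, LinearMap.comp_apply, LinearMap.add_apply,
      LinearMap.zero_apply, AlgebraTensorModule.curry_apply,
      TensorProduct.curry_apply, LinearMap.coe_restrictScalars,
      TensorProduct.map_tmul, LinearMap.id_apply, map_add, map_neg,
      phhℓ, phhr, phgℓ, phℓσ, pfhℓ, map_zero, TensorProduct.zero_tmul,
      TensorProduct.tmul_zero, add_zero, zero_add, neg_zero]
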